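/- add(N) ≥ min{ non(R), 𝔟 }, where N is the ideal of Lebesgue-null subsets of ℝ and R is the Raisonnier ideal on 2^ω. -/

import Mathlib

open Filter Set

/-- The splitting point of two distinct elements of Cantor space. -/
noncomputable def splitPt (x y : ℕ → Bool) : ℕ := sInf {n | x n ≠ y n}

/-- The set of splitting points of a set `X ⊆ 2^ω`. -/
def splitPts (X : Set (ℕ → Bool)) : Set ℕ :=
  {k | ∃ x ∈ X, ∃ y ∈ X, x ≠ y ∧ splitPt x y = k}

/-- The Raisonnier filter of `X ⊆ 2^ω`. -/
def raisonnier (X : Set (ℕ → Bool)) : Set (Set ℕ) :=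
  {a | ∃ Y : ℕ → Set (ℕ → Bool), X ⊆ (⋃ n, Y n) ∧ (⋃ n, splitPts (Y n)) ⊆ a}

/-- A family `F` of subsets of ℕ is rapid if for every strictly increasing `f : ℕ → ℕ`
there is `a ∈ F` with `|a ∩ [0, f n)| ≤ n` for all `n`. (The trivial filter `𝒫(ℕ)`
trivially satisfies this.) -/
def IsRapid (F : Set (Set ℕ)) : Prop :=
  ∀ f : ℕ → ℕ, StrictMono f → ∃ a ∈ F, ∀ n, (a ∩ Set.Iio (f n)).ncard ≤ n

/-- The Raisonnier ideal: the collection of `X ⊆ 2^ω` whose Raisonnier filter is rapid. -/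
def Rideal : Set (Set (ℕ → Bool)) := {X | IsRapid (raisonnier X)}

open MeasureTheory Cardinal in
/-- `add(N)`: the least cardinality of a family of Lebesgue-null subsets of ℝ whose
union is not Lebesgue-null. -/
noncomputable def addNull : Cardinal :=
  sInf {c : Cardinal | ∃ A : Set (Set ℝ), #A = c ∧
    (∀ s ∈ A, volume s = 0) ∧ volume (⋃₀ A) ≠ 0}

open MeasureTheory Cardinal in
/-- `cof(N)`: the least cardinality of a family of Lebesgue-null subsets of ℝ that is
cofinal in the null ideal. -/
noncomputable def cofNull : Cardinal :=
  sInf {c : Cardinal | ∃ A : Set (Set ℝ), #A = c ∧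
    (∀ s ∈ A, volume s = 0) ∧ ∀ t : Set ℝ, volume t = 0 → ∃ s ∈ A, t ⊆ s}

open Cardinal in
/-- `non(R)`: the least cardinality of a subset of `2^ω` not in the Raisonnier ideal. -/
noncomputable def nonR : Cardinal :=
  sInf {c : Cardinal | ∃ X : Set (ℕ → Bool), #X = c ∧ X ∉ Rideal}

open Cardinal in
/-- `cov(R)`: the least cardinality of a subfamily of the Raisonnier ideal covering `2^ω`. -/
noncomputable def covR : Cardinal :=
  sInf {c : Cardinal | ∃ C : Set (Set (ℕ → Bool)), #C = c ∧
    (∀ X ∈ C, X ∈ Rideal) ∧ ⋃₀ C = Set.univ}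

open Cardinal in
/-- The bounding number `𝔟`: the least cardinality of a `≤*`-unbounded family in `ω^ω`. -/
noncomputable def boundingNum : Cardinal :=
  sInf {c : Cardinal | ∃ F : Set (ℕ → ℕ), #F = c ∧
    ∀ g : ℕ → ℕ, ∃ f ∈ F, ¬ ∀ᶠ n in Filter.atTop, f n ≤ g n}

open Cardinal in
/-- The dominating number `𝔡`: the least cardinality of a `≤*`-dominating family in `ω^ω`. -/
noncomputable def dominatingNum : Cardinal :=
  sInf {c : Cardinal | ∃ D : Set (ℕ → ℕ), #D = c ∧
    ∀ f : ℕ → ℕ, ∃ g ∈ D, ∀ᶠ n in Filter.atTop, f n ≤ g n}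


namespace R16
open MeasureTheory
open scoped ENNReal

noncomputable def dy (m : ℕ) (z : ℤ) : Set ℝ := Set.Ico ((z : ℝ) / 2 ^ m) (((z : ℝ) + 1) / 2 ^ m)

noncomputable def dyo : Option (ℕ × ℤ) → Set ℝ
  | none => ∅
  | some p => dy p.1 p.2

lemma mem_dy {m : ℕ} {z : ℤ} {x : ℝ} : x ∈ dy m z ↔ ⌊x * 2 ^ m⌋ = z := by
  have h2 : (0:ℝ) < 2 ^ m := by positivity
  rw [dy, Set.mem_Ico, div_le_iff₀ h2, lt_div_iff₀ h2, Int.floor_eq_iff]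

lemma vol_dy (m : ℕ) (z : ℤ) : volume (dy m z) = 2⁻¹ ^ m := by
  rw [dy, Real.volume_Ico]
  have h : ((z : ℝ) + 1) / 2 ^ m - (z:ℝ) / 2 ^ m = (2⁻¹ : ℝ) ^ m := by
    rw [div_sub_div_same, inv_pow]; field_simp; ring
  rw [h, ENNReal.ofReal_pow (by norm_num)]
  have h2 : ENNReal.ofReal (2⁻¹:ℝ) = 2⁻¹ := by
    rw [ENNReal.ofReal_inv_of_pos (by norm_num)]; norm_num
  rw [h2]

lemma vol_dyo (o : Option (ℕ × ℤ)) : volume (dyo o) = Option.rec 0 (fun p => 2⁻¹ ^ p.1) o := by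
  cases o with
  | none => simp [dyo]
  | some p => simpa [dyo] using vol_dy p.1 p.2

lemma int_floor_div_nat (y : ℝ) (d : ℕ) (hd : 0 < d) : ⌊y / d⌋ = ⌊y⌋ / d := by
  have hd' : (0:ℝ) < (d:ℝ) := by exact_mod_cast hd
  have hdz : (0:ℤ) < (d:ℤ) := by exact_mod_cast hd
  rw [Int.floor_eq_iff]
  have h1 : (↑⌊y⌋ : ℝ) ≤ y := Int.floor_le y
  have h2 : y < ↑⌊y⌋ + 1 := Int.lt_floor_add_one y
  have e : (d:ℤ) * (⌊y⌋ / d) + ⌊y⌋ % d = ⌊y⌋ := Int.mul_ediv_add_emod _ _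
  have hr1 : (0:ℤ) ≤ ⌊y⌋ % d := Int.emod_nonneg _ (by omega)
  have hr2 : (⌊y⌋ % d : ℤ) < d := Int.emod_lt_of_pos _ hdz
  have e1 : (d:ℤ) * (⌊y⌋ / d) ≤ ⌊y⌋ := by omega
  have e2 : (⌊y⌋ : ℤ) < (d:ℤ) * (⌊y⌋ / d) + d := by omega
  have e1' : ((d:ℤ) * (⌊y⌋ / d) : ℤ) ≤ (⌊y⌋:ℝ) := by exact_mod_cast e1
  have e2' : ((⌊y⌋:ℤ):ℝ) < ((d:ℤ) * (⌊y⌋ / d) + d : ℤ) := by exact_mod_cast e2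
  have e3 : (⌊y⌋ : ℤ) + 1 ≤ (d:ℤ) * (⌊y⌋ / d) + d := by omega
  have e3' : ((⌊y⌋:ℤ):ℝ) + 1 ≤ ((d:ℤ) * (⌊y⌋ / d) + d : ℤ) := by exact_mod_cast e3
  push_cast at e1' e2' e3' ⊢
  constructor
  · rw [le_div_iff₀ hd']; nlinarith
  · rw [div_lt_iff₀ hd']; nlinarith

lemma dy_subset {m' m : ℕ} (h : m' ≤ m) (z : ℤ) : dy m z ⊆ dy m' (z / 2 ^ (m - m')) := by
  intro x hx
  rw [mem_dy] at hx ⊢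
  have e : x * 2 ^ m' = (x * 2 ^ m) / ((2 ^ (m - m') : ℕ) : ℝ) := by
    push_cast
    rw [eq_div_iff (by positivity), mul_assoc, ← pow_add]
    congr 2
    omega
  rw [e, int_floor_div_nat _ _ (by positivity), hx]
  push_cast
  rfl


lemma dy_measurable (m : ℕ) (z : ℤ) : MeasurableSet (dy m z) := measurableSet_Ico

lemma dy_anc_unique {m' m : ℕ} (h : m' ≤ m) {z z' : ℤ} {x : ℝ}
    (hx : x ∈ dy m z) (hx' : x ∈ dy m' z') : z' = z / 2 ^ (m - m') := by
  have h1 := dy_subset h z hx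
  rw [mem_dy] at h1 hx'
  omega

def sel (U : Set ℝ) : Set (ℕ × ℤ) :=
  {p | dy p.1 p.2 ⊆ U ∧ ∀ m' < p.1, ¬ dy m' (p.2 / 2 ^ (p.1 - m')) ⊆ U}

lemma sel_cover {U : Set ℝ} (hU : IsOpen U) : U = ⋃ p ∈ sel U, dy p.1 p.2 := by
  classical
  apply Set.Subset.antisymm
  · intro x hx
    obtain ⟨δ, hδ, hball⟩ := Metric.isOpen_iff.mp hU x hx
    have hmem : ∀ m : ℕ, x ∈ dy m ⌊x * 2 ^ m⌋ := fun m => mem_dy.mpr rfl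
    have hS : ∃ m : ℕ, dy m ⌊x * 2 ^ m⌋ ⊆ U := by
      obtain ⟨m, hm⟩ := exists_pow_lt_of_lt_one hδ (by norm_num : (2⁻¹:ℝ) < 1)
      refine ⟨m, fun y hy => hball ?_⟩
      rw [Metric.mem_ball, Real.dist_eq]
      have h2 : (0:ℝ) < 2 ^ m := by positivity
      have hx' := hmem m
      have hinv2 : (2⁻¹:ℝ) ^ m * 2 ^ m = 1 := by rw [inv_pow]; field_simp
      rw [mem_dy] at hy
      have b1 : (↑⌊x * 2 ^ m⌋ : ℝ) ≤ y * 2 ^ m := by rw [← hy]; exact Int.floor_le _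
      have b2 : y * 2 ^ m < ↑⌊x * 2 ^ m⌋ + 1 := by rw [← hy]; exact Int.lt_floor_add_one _
      have b3 : (↑⌊x * 2 ^ m⌋ : ℝ) ≤ x * 2 ^ m := Int.floor_le _
      have b4 : x * 2 ^ m < ↑⌊x * 2 ^ m⌋ + 1 := Int.lt_floor_add_one _
      have e1 : -(1:ℝ) < (y - x) * 2 ^ m := by nlinarith
      have e2 : (y - x) * 2 ^ m < 1 := by nlinarith
      have habs : |y - x| < 2⁻¹ ^ m := by
        rw [abs_lt]
        constructor
        · nlinarith
        · nlinarith
      exact lt_trans habs hm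
    let m₀ := Nat.find hS
    have hm₀ : dy m₀ ⌊x * 2 ^ m₀⌋ ⊆ U := Nat.find_spec hS
    refine Set.mem_biUnion (show (m₀, ⌊x * 2 ^ m₀⌋) ∈ sel U from ⟨hm₀, ?_⟩) (hmem m₀)
    intro m' hm' hsub
    have : ⌊x * 2 ^ m₀⌋ / 2 ^ (m₀ - m') = ⌊x * 2 ^ m'⌋ :=
      (dy_anc_unique (le_of_lt hm') (hmem m₀) (hmem m')).symm
    exact Nat.find_min hS hm' (by rwa [this] at hsub)
  · exact Set.iUnion₂_subset fun p hp => hp.1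

lemma sel_disjoint (U : Set ℝ) : (sel U).PairwiseDisjoint (fun p => dy p.1 p.2) := by
  have key : ∀ p ∈ sel U, ∀ q ∈ sel U, p.1 ≤ q.1 → ∀ x : ℝ, x ∈ dy p.1 p.2 → x ∈ dy q.1 q.2 → p = q := by
    rintro ⟨m, z⟩ hp ⟨m', z'⟩ hq hle x hx hx'
    have hz : z = z' / 2 ^ (m' - m) := dy_anc_unique hle hx' hx
    rcases Nat.eq_or_lt_of_le hle with rfl | hlt
    · simp only [Nat.sub_self, pow_zero, Int.ediv_one] at hz; rw [hz]
    · exact absurd (hz ▸ hp.1) (hq.2 m hlt)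
  intro p hp q hq hne
  rw [Function.onFun, Set.disjoint_left]
  intro x hxp hxq
  rcases le_total p.1 q.1 with h | h
  · exact hne (key p hp q hq h x hxp hxq)
  · exact hne (key q hq p hp h x hxq hxp).symm

lemma null_cover {A : Set ℝ} (hA : volume A = 0) {ε : ℝ≥0∞} (hε : 0 < ε) :
    ∃ e : ℕ → Option (ℕ × ℤ), (∀ x ∈ A, ∃ j, x ∈ dyo (e j)) ∧ ∑' j, volume (dyo (e j)) ≤ ε := by
  classical
  obtain ⟨U, hAU, hUopen, hUvol⟩ := Set.exists_isOpen_lt_of_lt A ε (by rw [hA]; exact hε)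
  let d : ℕ ≃ ℕ × ℤ := (Denumerable.eqv (ℕ × ℤ)).symm
  refine ⟨fun j => if d j ∈ sel U then some (d j) else none, ?_, ?_⟩
  · intro x hx
    have := (sel_cover hUopen) ▸ hAU hx
    obtain ⟨p, hp, hxp⟩ := Set.mem_iUnion₂.mp this
    exact ⟨d.symm p, by simp only [Equiv.apply_symm_apply, if_pos hp]; exact hxp⟩
  · calc ∑' j, volume (dyo (if d j ∈ sel U then some (d j) else none))
        = ∑' j, (fun p => if p ∈ sel U then volume (dy p.1 p.2) else 0) (d j) := by
          refine tsum_congr fun j => ?_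
          simp only
          by_cases h : d j ∈ sel U
          · rw [if_pos h]
            exact (if_pos h).symm
          · rw [if_neg h]
            rw [show (if d j ∈ sel U then volume (dy (d j).1 (d j).2) else 0) = 0 from if_neg h]
            simp [dyo]
      _ = ∑' (p : ℕ × ℤ), if p ∈ sel U then volume (dy p.1 p.2) else 0 :=
          d.tsum_eq (fun p => if p ∈ sel U then volume (dy p.1 p.2) else 0)
      _ = ∑' (p : (sel U : Set (ℕ × ℤ))), volume (dy p.1.1 p.1.2) := by
          rw [tsum_subtype (sel U) (fun p => volume (dy p.1 p.2))]
          refine tsum_congr fun p => ?_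
          rw [Set.indicator_apply]
      _ = volume (⋃ p ∈ sel U, dy p.1 p.2) :=
          (measure_biUnion (Set.to_countable _) (sel_disjoint U)
            (fun p _ => dy_measurable p.1 p.2)).symm
      _ ≤ ε := by rw [← sel_cover hUopen]; exact le_of_lt hUvol

lemma master_cover {A : Set ℝ} (hA : volume A = 0) :
    ∃ E : ℕ → Option (ℕ × ℤ),
      (∀ x ∈ A, {j | x ∈ dyo (E j)}.Infinite) ∧ ∑' j, volume (dyo (E j)) ≠ ∞ := by
  choose e he1 he2 using fun k : ℕ => null_cover hA (ε := 2⁻¹ ^ k) (ENNReal.pow_pos (by simp) k)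
  refine ⟨fun j => e (Nat.unpair j).1 (Nat.unpair j).2, ?_, ?_⟩
  · intro x hx
    choose i hi using fun k => he1 k x hx
    apply Set.infinite_of_injective_forall_mem (f := fun k => Nat.pair k (i k))
    · intro k k' hkk'
      exact (Nat.pair_eq_pair.mp hkk').1
    · intro k; simp only [Set.mem_setOf_eq, Nat.unpair_pair]; exact hi k
  · have : ∑' j, volume (dyo (e (Nat.unpair j).1 (Nat.unpair j).2))
        = ∑' (w : ℕ × ℕ), volume (dyo (e w.1 w.2)) := by
      rw [← Nat.pairEquiv.tsum_eq (fun j => volume (dyo (e (Nat.unpair j).1 (Nat.unpair j).2)))]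
      refine tsum_congr fun w => ?_
      rcases w with ⟨k, i⟩
      simp only [show Nat.pairEquiv (k, i) = Nat.pair k i from rfl, Nat.unpair_pair]
    rw [this, ENNReal.tsum_prod (f := fun a b => volume (dyo (e a b)))]
    have hle : ∑' (k : ℕ), ∑' (i : ℕ), volume (dyo (e k i)) ≤ ∑' (k : ℕ), (2⁻¹:ℝ≥0∞) ^ k :=
      ENNReal.tsum_le_tsum fun k => he2 k
    rw [ENNReal.tsum_geometric] at hle
    intro htop
    rw [htop] at hle
    simp [ENNReal.one_sub_inv_two] at hle

def cplx : Option (ℕ × ℤ) → ℕ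
  | none => 0
  | some p => max p.1 p.2.natAbs

lemma cplx_none : cplx none = 0 := rfl

def enc1 (g : ℕ) : Option (ℕ × ℤ) → ℕ
  | none => 0
  | some p => 1 + (p.1 * (2 * g + 1) + (p.2 + g).toNat)

noncomputable def dec1 (g : ℕ) (c : ℕ) : Option (ℕ × ℤ) :=
  if c = 0 then none else some ((c - 1) / (2 * g + 1), (((c - 1) % (2 * g + 1) : ℕ) : ℤ) - g)

def base (g : ℕ) : ℕ := g * (2 * g + 1) + 2 * g + 2

lemma enc1_lt_base (g : ℕ) (o : Option (ℕ × ℤ)) (h : cplx o ≤ g) : enc1 g o < base g := by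
  cases o with
  | none => simp [enc1, base]
  | some p =>
    obtain ⟨m, z⟩ := p
    simp only [cplx, max_le_iff] at h
    have h1 : m * (2 * g + 1) ≤ g * (2 * g + 1) := Nat.mul_le_mul_right _ h.1
    have h2 : (z + g).toNat ≤ 2 * g := by
      have := h.2
      omega
    simp only [enc1, base]
    omega

lemma dec1_enc1 (g : ℕ) (o : Option (ℕ × ℤ)) (h : cplx o ≤ g) : dec1 g (enc1 g o) = o := by
  cases o with
  | none => simp [enc1, dec1]
  | some p =>
    obtain ⟨m, z⟩ := p
    simp only [cplx, max_le_iff] at h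
    have hz : z.natAbs ≤ g := h.2
    have hw : ((z + g).toNat : ℤ) = z + g := Int.toNat_of_nonneg (by omega)
    have hwle : (z + g).toNat < 2 * g + 1 := by omega
    rw [dec1, if_neg (show enc1 g (some (m, z)) ≠ 0 by simp [enc1])]
    simp only [enc1]
    have e1 : 1 + (m * (2 * g + 1) + (z + g).toNat) - 1 = (2 * g + 1) * m + (z + g).toNat := by
      rw [mul_comm]; omega
    rw [e1, Nat.mul_add_div (by omega), Nat.mul_add_mod, Nat.div_eq_of_lt hwle,
      Nat.mod_eq_of_lt hwle]
    simp only [Option.some.injEq, Prod.mk.injEq]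
    constructor
    · omega
    · omega

def bitsVal (x : ℕ → Bool) (s w : ℕ) : ℕ :=
  ∑ t ∈ Finset.range w, if x (s + t) then 2 ^ t else 0

lemma sum_testBit (w : ℕ) : ∀ c : ℕ, c < 2 ^ w →
    ∑ t ∈ Finset.range w, (if Nat.testBit c t then 2 ^ t else 0) = c := by
  induction w with
  | zero => intro c hc; simp at hc ⊢; omega
  | succ w ih =>
    intro c hc
    rw [Finset.sum_range_succ']
    simp only [Nat.testBit_add_one]
    have hc2 : c / 2 < 2 ^ w := by
      rw [pow_succ] at hc; omega
    have e : ∑ t ∈ Finset.range w, (if (c / 2).testBit t then 2 ^ (t + 1) else 0)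
        = 2 * ∑ t ∈ Finset.range w, (if (c / 2).testBit t then 2 ^ t else 0) := by
      rw [Finset.mul_sum]
      refine Finset.sum_congr rfl fun t _ => ?_
      split_ifs <;> ring
    rw [e, ih _ hc2]
    have h0 : c.testBit 0 = true ↔ c % 2 = 1 := by
      simp [Nat.testBit_zero]
    by_cases hb : c.testBit 0
    · rw [if_pos hb]
      have := h0.mp hb
      omega
    · rw [if_neg hb]
      have : ¬ (c % 2 = 1) := fun hh => hb (h0.mpr hh)
      omega

lemma bitsVal_eq (x : ℕ → Bool) (s w c : ℕ) (hc : c < 2 ^ w)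
    (h : ∀ t, t < w → x (s + t) = Nat.testBit c t) : bitsVal x s w = c := by
  rw [bitsVal, ← sum_testBit w c hc]
  refine Finset.sum_congr rfl fun t ht => ?_
  rw [h t (Finset.mem_range.mp ht)]

section Coding
variable (G : ℕ → ℕ)

def Wd (n : ℕ) : ℕ := base (G n)
def Md (n : ℕ) : ℕ := G n * Wd G n
def Bd : ℕ → ℕ
  | 0 => 0
  | n + 1 => Bd n + Md G n

lemma Wd_pos (n : ℕ) : 0 < Wd G n := by simp only [Wd, base]; omega

variable (hG : ∀ k, 1 ≤ G k)
include hG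

lemma Md_pos (n : ℕ) : 0 < Md G n :=
  Nat.mul_pos (hG n) (Wd_pos G n)

lemma Bd_lt (n : ℕ) : Bd G n < Bd G (n + 1) := by
  have := Md_pos G hG n
  simp only [Bd]; omega

lemma Bd_mono : StrictMono (Bd G) :=
  strictMono_nat_of_lt_succ (Bd_lt G hG)

lemma Bd_ge (n : ℕ) : n ≤ Bd G n := by
  induction n with
  | zero => simp [Bd]
  | succ k ihk => have := Bd_lt G hG k; omega

end Coding

def blockOf (G : ℕ → ℕ) (p : ℕ) : ℕ := Nat.findGreatest (fun n => Bd G n ≤ p) p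

lemma blockOf_eq (G : ℕ → ℕ) (hG : ∀ k, 1 ≤ G k) {n p : ℕ}
    (h1 : Bd G n ≤ p) (h2 : p < Bd G (n + 1)) : blockOf G p = n := by
  classical
  have hnp : n ≤ p := le_trans (Bd_ge G hG n) h1
  have hge : n ≤ blockOf G p := Nat.le_findGreatest hnp h1
  have hspec : Bd G (blockOf G p) ≤ p :=
    Nat.findGreatest_spec (P := fun n => Bd G n ≤ p) hnp h1
  by_contra hne
  have hlt : n + 1 ≤ blockOf G p := by omega
  have := (Bd_mono G hG).monotone hlt
  omega

section Coding2
variable (G : ℕ → ℕ)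

noncomputable def codeFn (σ : ℕ → ℕ → Option (ℕ × ℤ)) : ℕ → Bool :=
  fun p =>
    Nat.testBit (enc1 (G (blockOf G p)) (σ (blockOf G p)
      ((p - Bd G (blockOf G p)) / Wd G (blockOf G p))))
      ((p - Bd G (blockOf G p)) % Wd G (blockOf G p))

noncomputable def entryVal (x : ℕ → Bool) (n i : ℕ) : ℕ :=
  bitsVal x (Bd G n + i * Wd G n) (Wd G n)

noncomputable def Vset (x : ℕ → Bool) (n : ℕ) : Set ℝ :=
  ⋃ i ∈ Finset.range (G n), dyo (dec1 (G n) (entryVal G x n i))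

open scoped Classical in
noncomputable def decodeSet (x : ℕ → Bool) (n : ℕ) : Set ℝ :=
  if volume (Vset G x n) ≤ 2⁻¹ ^ (3 * n) then Vset G x n else ∅

lemma vol_decodeSet (x : ℕ → Bool) (n : ℕ) : volume (decodeSet G x n) ≤ 2⁻¹ ^ (3 * n) := by
  rw [decodeSet]
  split_ifs with h
  · exact h
  · simp

lemma pos_lt (hG : ∀ k, 1 ≤ G k) {n i t : ℕ} (hi : i < G n) (ht : t < Wd G n) :
    i * Wd G n + t < Md G n := by
  have h1 : i * Wd G n + t < (i + 1) * Wd G n := by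
    rw [add_mul, one_mul]; omega
  have h2 : (i + 1) * Wd G n ≤ G n * Wd G n := Nat.mul_le_mul_right _ (by omega)
  simp only [Md]; omega

lemma codeFn_bit (hG : ∀ k, 1 ≤ G k) (σ : ℕ → ℕ → Option (ℕ × ℤ)) {n i t : ℕ}
    (hi : i < G n) (ht : t < Wd G n) :
    codeFn G σ (Bd G n + (i * Wd G n + t)) = Nat.testBit (enc1 (G n) (σ n i)) t := by
  have hlt := pos_lt G hG hi ht
  have hb : blockOf G (Bd G n + (i * Wd G n + t)) = n :=
    blockOf_eq G hG (by omega) (by simp only [Bd]; omega)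
  rw [codeFn, hb]
  have e1 : Bd G n + (i * Wd G n + t) - Bd G n = Wd G n * i + t := by rw [mul_comm]; omega
  rw [e1, Nat.mul_add_div (Wd_pos G n), Nat.mul_add_mod, Nat.div_eq_of_lt ht,
    Nat.mod_eq_of_lt ht, add_zero]

lemma entryVal_code (hG : ∀ k, 1 ≤ G k) (σ : ℕ → ℕ → Option (ℕ × ℤ)) {n i : ℕ}
    (hi : i < G n) (hc : cplx (σ n i) ≤ G n) :
    entryVal G (codeFn G σ) n i = enc1 (G n) (σ n i) := by
  have hlt : enc1 (G n) (σ n i) < 2 ^ Wd G n := by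
    have h1 := enc1_lt_base (G n) (σ n i) hc
    have h2 : base (G n) < 2 ^ base (G n) := Nat.lt_two_pow_self
    simp only [Wd]; omega
  refine bitsVal_eq _ _ _ _ hlt fun t ht => ?_
  rw [add_assoc]
  exact codeFn_bit G hG σ hi ht

lemma decode_code (hG : ∀ k, 1 ≤ G k) (σ : ℕ → ℕ → Option (ℕ × ℤ)) (n : ℕ)
    (hc : ∀ i, i < G n → cplx (σ n i) ≤ G n)
    (hvol : volume (⋃ i ∈ Finset.range (G n), dyo (σ n i)) ≤ 2⁻¹ ^ (3 * n)) :
    decodeSet G (codeFn G σ) n = ⋃ i ∈ Finset.range (G n), dyo (σ n i) := by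
  have hV : Vset G (codeFn G σ) n = ⋃ i ∈ Finset.range (G n), dyo (σ n i) := by
    refine Set.iUnion₂_congr fun i hi => ?_
    have hi' := Finset.mem_range.mp hi
    rw [entryVal_code G hG σ hi' (hc i hi'), dec1_enc1 _ _ (hc i hi')]
  rw [decodeSet, hV, if_pos hvol]

lemma decode_local {x y : ℕ → Bool} {n : ℕ}
    (h : ∀ q, q < Bd G (n + 1) → x q = y q) : decodeSet G x n = decodeSet G y n := by
  have hV : Vset G x n = Vset G y n := by
    refine Set.iUnion₂_congr fun i hi => ?_
    have hi' := Finset.mem_range.mp hi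
    have he : entryVal G x n i = entryVal G y n i := by
      unfold entryVal bitsVal
      refine Finset.sum_congr rfl fun t ht => ?_
      have ht' := Finset.mem_range.mp ht
      rw [h]
      have h1 : i * Wd G n + t < Md G n := by
        have h1 : i * Wd G n + t < (i + 1) * Wd G n := by rw [add_mul, one_mul]; omega
        have h2 : (i + 1) * Wd G n ≤ G n * Wd G n := Nat.mul_le_mul_right _ (by omega)
        simp only [Md]; omega
      simp only [Bd]
      omega
    rw [he]
  rw [decodeSet, decodeSet, hV]

end Coding2

def mkK (J : ℕ → ℕ) : ℕ → ℕ
  | 0 => 0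
  | n + 1 => max (mkK J n + 1) (J (n + 1))

lemma mkK_zero (J : ℕ → ℕ) : mkK J 0 = 0 := rfl

lemma mkK_lt (J : ℕ → ℕ) (n : ℕ) : mkK J n < mkK J (n + 1) := by
  simp only [mkK]; omega

lemma mkK_ge (J : ℕ → ℕ) (n : ℕ) : J (n + 1) ≤ mkK J (n + 1) := by
  simp [mkK]

lemma exists_block (F : ℕ → ℕ) (h0 : F 0 = 0) (hs : ∀ n, F n < F (n + 1)) (j : ℕ) :
    ∃ n, F n ≤ j ∧ j < F (n + 1) := by
  induction j with
  | zero => exact ⟨0, by omega, by have := hs 0; omega⟩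
  | succ j ihj =>
    obtain ⟨n, hn1, hn2⟩ := ihj
    by_cases h : j + 1 < F (n + 1)
    · exact ⟨n, by omega, h⟩
    · exact ⟨n + 1, by omega, by have := hs (n + 1); omega⟩

lemma two_pow_mul_inv_pow (a c : ℕ) : (2 : ℝ≥0∞) ^ a * 2⁻¹ ^ (a + c) = 2⁻¹ ^ c := by
  induction a with
  | zero => simp
  | succ a iha =>
    have h2 : (2 : ℝ≥0∞) * 2⁻¹ = 1 := ENNReal.mul_inv_cancel (by norm_num) (by norm_num)
    calc (2 : ℝ≥0∞) ^ (a + 1) * 2⁻¹ ^ (a + 1 + c)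
        = (2 * 2⁻¹) * ((2 : ℝ≥0∞) ^ a * 2⁻¹ ^ (a + c)) := by
          rw [pow_succ, show a + 1 + c = (a + c) + 1 from by omega, pow_succ]; ring
      _ = 2⁻¹ ^ c := by rw [h2, one_mul, iha]

lemma tsum_tail_le (f : ℕ → ℝ≥0∞) {J J' : ℕ} (h : J ≤ J') :
    ∑' j, f (j + J') ≤ ∑' j, f (j + J) := by
  have e : ∀ j : ℕ, f (j + J') = (fun k => f (k + J)) (j + (J' - J)) := by
    intro j; simp only; congr 1; omega
  calc ∑' j, f (j + J') = ∑' j, (fun k => f (k + J)) (j + (J' - J)) := tsum_congr e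
    _ ≤ ∑' j, f (j + J) := by
        refine ENNReal.summable.tsum_le_tsum_of_inj (fun j => j + (J' - J)) (add_left_injective _)
          (fun c _ => zero_le) (fun b => le_refl _) ENNReal.summable

lemma sum_block_le (f : ℕ → ℝ≥0∞) (a b : ℕ) :
    ∑ j ∈ Finset.Ico a b, f j ≤ ∑' j, f (j + a) := by
  rw [Finset.sum_Ico_eq_sum_range]
  calc ∑ k ∈ Finset.range (b - a), f (a + k)
      = ∑ k ∈ Finset.range (b - a), f (k + a) := by
        refine Finset.sum_congr rfl fun t _ => ?_; rw [add_comm]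
    _ ≤ ∑' j, f (j + a) := ENNReal.sum_le_tsum _


open Cardinal in
lemma main_null (A : Set (Set ℝ)) (hnull : ∀ s ∈ A, volume s = 0)
    (hb : #A < boundingNum) (hr : #A < nonR) : volume (⋃₀ A) = 0 := by
  classical
  choose E hEcov hEsum using fun α : A => master_cover (hnull α.1 α.2)
  -- tail selections
  have hJex : ∀ (α : A) (n : ℕ), ∃ J : ℕ,
      ∑' j, volume (dyo (E α (j + J))) ≤ 2⁻¹ ^ (3 * n) := by
    intro α n
    have ht := ENNReal.tendsto_sum_nat_add (fun j => volume (dyo (E α j))) (hEsum α)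
    have hpos : (0 : ℝ≥0∞) < 2⁻¹ ^ (3 * n) := ENNReal.pow_pos (by simp) _
    obtain ⟨J, hJ⟩ := (ht.eventually_lt_const hpos).exists
    exact ⟨J, le_of_lt hJ⟩
  choose J hJ using hJex
  set K : A → ℕ → ℕ := fun α => mkK (J α) with hKdef
  set hcx : A → ℕ → ℕ := fun α n =>
    max (K α (n + 1)) ((Finset.range (K α (n + 1))).sup fun j => cplx (E α j)) with hcxdef
  -- bounding number gives a dominating function
  have hbound : ∃ g : ℕ → ℕ, ∀ α : A, ∀ᶠ n in Filter.atTop, hcx α n ≤ g n := by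
    by_contra hcon
    push_neg at hcon
    have hmem : Set.range hcx ∈ {F : Set (ℕ → ℕ) | ∀ g : ℕ → ℕ, ∃ f ∈ F,
        ¬ ∀ᶠ n in Filter.atTop, f n ≤ g n} := by
      intro g
      obtain ⟨α, hα⟩ := hcon g
      exact ⟨hcx α, ⟨α, rfl⟩, Filter.not_eventually.mpr (hα.mono fun n hn => not_le.mpr hn)⟩
    have hle : boundingNum ≤ #(Set.range hcx) := csInf_le' ⟨Set.range hcx, rfl, hmem⟩
    exact absurd hb (not_lt.mpr (le_trans hle Cardinal.mk_range_le))
  obtain ⟨g, hg⟩ := hbound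
  set G : ℕ → ℕ := fun n => g n + n + 1 with hGdef
  have hG : ∀ k, 1 ≤ G k := fun k => by simp [hGdef]
  -- slot contents
  set σ : A → ℕ → ℕ → Option (ℕ × ℤ) := fun α n i =>
    if 1 ≤ n ∧ hcx α n ≤ G n ∧ K α n ≤ i ∧ i < K α (n + 1) then E α i else none with hσdef
  have hσc : ∀ (α : A) (n i : ℕ), cplx (σ α n i) ≤ G n := by
    intro α n i
    simp only [hσdef]
    split_ifs with hcond
    · have h1 : cplx (E α i) ≤ (Finset.range (K α (n + 1))).sup fun j => cplx (E α j) :=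
        Finset.le_sup (f := fun j => cplx (E α j)) (Finset.mem_range.mpr hcond.2.2.2)
      have h2 : ((Finset.range (K α (n + 1))).sup fun j => cplx (E α j)) ≤ hcx α n :=
        le_max_right _ _
      exact le_trans h1 (le_trans h2 hcond.2.1)
    · rw [cplx_none]
      exact Nat.zero_le _
  have hσvol : ∀ (α : A) (n : ℕ),
      volume (⋃ i ∈ Finset.range (G n), dyo (σ α n i)) ≤ 2⁻¹ ^ (3 * n) := by
    intro α n
    by_cases hact : 1 ≤ n ∧ hcx α n ≤ G n
    · have hsub : (⋃ i ∈ Finset.range (G n), dyo (σ α n i)) ⊆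
          ⋃ i ∈ Finset.Ico (K α n) (K α (n + 1)), dyo (E α i) := by
        refine Set.iUnion₂_subset fun i _ => ?_
        simp only [hσdef]
        split_ifs with hcond
        · intro y hy
          exact Set.mem_biUnion (Finset.mem_Ico.mpr ⟨hcond.2.2.1, hcond.2.2.2⟩) hy
        · simp [dyo]
      have hKge : J α n ≤ K α n := by
        obtain ⟨n', rfl⟩ : ∃ n', n = n' + 1 := ⟨n - 1, by omega⟩
        exact mkK_ge (J α) n'
      calc volume (⋃ i ∈ Finset.range (G n), dyo (σ α n i))
          ≤ volume (⋃ i ∈ Finset.Ico (K α n) (K α (n + 1)), dyo (E α i)) := measure_mono hsub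
        _ ≤ ∑ i ∈ Finset.Ico (K α n) (K α (n + 1)), volume (dyo (E α i)) :=
            measure_biUnion_finset_le _ _
        _ ≤ ∑' j, volume (dyo (E α (j + K α n))) := sum_block_le _ _ _
        _ ≤ ∑' j, volume (dyo (E α (j + J α n))) := tsum_tail_le (fun j => volume (dyo (E α j))) hKge
        _ ≤ 2⁻¹ ^ (3 * n) := hJ α n
    · have hempty : ∀ i ∈ Finset.range (G n), dyo (σ α n i) = (∅ : Set ℝ) := by
        intro i _
        simp only [hσdef]
        rw [if_neg fun hcond => hact ⟨hcond.1, hcond.2.1⟩]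
        rfl
      rw [Set.iUnion₂_congr hempty]
      simp
  -- the coded set
  set xc : A → (ℕ → Bool) := fun α => codeFn G (σ α) with hxcdef
  set X : Set (ℕ → Bool) := Set.range xc with hXdef
  have hXR : X ∈ Rideal := by
    by_contra hX
    have : nonR ≤ #X := csInf_le' ⟨X, rfl, hX⟩
    exact absurd hr (not_lt.mpr (le_trans this Cardinal.mk_range_le))
  -- coverage: each point of each α is in the decoded slot set for infinitely many n
  have hcov : ∀ (α : A), ∀ x ∈ (α.1 : Set ℝ), ∀ N, ∃ n, N ≤ n ∧
      x ∈ ⋃ i ∈ Finset.range (G n), dyo (σ α n i) := by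
    intro α x hx N
    obtain ⟨Nα, hNα⟩ := Filter.eventually_atTop.mp (hg α)
    set N' := max (max N Nα) 1 with hN'def
    obtain ⟨j, hjmem, hjge⟩ := (hEcov α x hx).exists_gt (K α N')
    obtain ⟨n, hn1, hn2⟩ := exists_block (K α) (mkK_zero (J α)) (fun k => mkK_lt (J α) k) j
    have hmono : StrictMono (K α) := strictMono_nat_of_lt_succ fun k => mkK_lt (J α) k
    have hN'n : N' ≤ n := by
      by_contra hh
      push_neg at hh
      have := hmono.monotone (show n + 1 ≤ N' by omega)
      omega
    have hn1' : 1 ≤ n := le_trans (le_max_right _ 1) hN'n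
    have hhcx : hcx α n ≤ G n := by
      have h1 : hcx α n ≤ g n := hNα n (le_trans (le_trans (le_max_right N Nα) (le_max_left _ 1)) hN'n)
      simp only [hGdef]; omega
    have hjG : j < G n := by
      have h1 : K α (n + 1) ≤ hcx α n := le_max_left _ _
      omega
    refine ⟨n, le_trans (le_trans (le_max_left N Nα) (le_max_left _ 1)) hN'n, ?_⟩
    refine Set.mem_biUnion (Finset.mem_range.mpr hjG) ?_
    simp only [hσdef]
    rw [if_pos ⟨hn1', hhcx, hn1, hn2⟩]
    exact hjmem
  -- main bound
  have hfinal : ∀ p : ℕ, volume (⋃₀ A) ≤ 2 * (2 * 2⁻¹ ^ p) := by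
    intro p
    set f : ℕ → ℕ := fun n => Bd G (n + p + 1) with hfdef
    have hf : StrictMono f := fun u v huv => (Bd_mono G hG) (by omega)
    obtain ⟨a, ⟨Y, hXY, hsp⟩, hthin⟩ := hXR f hf
    -- counting
    have hcount : ∀ m n : ℕ, volume (⋃ x ∈ Y m, decodeSet G x n)
        ≤ 2 ^ (n - p) * 2⁻¹ ^ (3 * n) := by
      intro m n
      set T : Set ℕ := a ∩ Set.Iio (Bd G (n + 1)) with hTdef
      have hTfin : T.Finite := (Set.finite_Iio _).subset inter_subset_right
      have hTcard : T.ncard ≤ n - p := by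
        have hsub : T ⊆ a ∩ Set.Iio (f (n - p)) := by
          intro q hq
          refine ⟨hq.1, Set.mem_Iio.mpr (lt_of_lt_of_le (Set.mem_Iio.mp hq.2) ?_)⟩
          exact (Bd_mono G hG).monotone (by omega : n + 1 ≤ (n - p) + p + 1)
        exact le_trans
          (Set.ncard_le_ncard hsub ((Set.finite_Iio _).subset inter_subset_right))
          (hthin (n - p))
      haveI : Finite ↥T := hTfin.to_subtype
      -- decode depends only on the restriction to T
      have hkey : ∀ x ∈ Y m, ∀ y ∈ Y m, (∀ q ∈ T, x q = y q) →
          decodeSet G x n = decodeSet G y n := by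
        intro x hxm y hym hagree
        by_contra hne
        have hdiff : ∃ q, q < Bd G (n + 1) ∧ x q ≠ y q := by
          by_contra hall
          push_neg at hall
          exact hne (decode_local G fun q hq => hall q hq)
        obtain ⟨q, hq1, hq2⟩ := hdiff
        have hxy : x ≠ y := fun h => hq2 (congrFun h q)
        have hsp' : splitPt x y ∈ a :=
          hsp (Set.mem_iUnion.mpr ⟨m, ⟨x, hxm, y, hym, hxy, rfl⟩⟩)
        have hmem : splitPt x y ∈ {k | x k ≠ y k} := Nat.sInf_mem ⟨q, hq2⟩
        have hle : splitPt x y ≤ q := Nat.sInf_le hq2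
        exact hmem (hagree _ ⟨hsp', lt_of_le_of_lt hle hq1⟩)
      -- map restrictions to decoded sets
      set Φ : (↥T → Bool) → Set ℝ := fun ρ =>
        if h : ∃ x, x ∈ Y m ∧ (fun q : ↥T => x q.1) = ρ then decodeSet G h.choose n else ∅
        with hΦdef
      have hΦvol : ∀ ρ, volume (Φ ρ) ≤ 2⁻¹ ^ (3 * n) := by
        intro ρ
        simp only [hΦdef]
        split_ifs with h
        · exact vol_decodeSet G _ n
        · simp
      have hsubΦ : (⋃ x ∈ Y m, decodeSet G x n) ⊆ ⋃ ρ : ↥T → Bool, Φ ρ := by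
        refine Set.iUnion₂_subset fun x hxm => ?_
        set ρ : ↥T → Bool := fun q => x q.1 with hρdef
        have hex : ∃ z, z ∈ Y m ∧ (fun q : ↥T => z q.1) = ρ := ⟨x, hxm, rfl⟩
        have hch := hex.choose_spec
        have heq : decodeSet G x n = decodeSet G hex.choose n := by
          refine hkey x hxm hex.choose hch.1 fun q hq => ?_
          have := congrFun hch.2 ⟨q, hq⟩
          exact this.symm
        refine Set.subset_iUnion_of_subset ρ ?_
        simp only [hΦdef]
        rw [dif_pos hex, ← heq]
      haveI : Fintype ↥T := hTfin.fintype
      calc volume (⋃ x ∈ Y m, decodeSet G x n)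
          ≤ volume (⋃ ρ : ↥T → Bool, Φ ρ) := measure_mono hsubΦ
        _ ≤ ∑' ρ : ↥T → Bool, volume (Φ ρ) := measure_iUnion_le _
        _ ≤ ∑' _ρ : ↥T → Bool, (2⁻¹ : ℝ≥0∞) ^ (3 * n) := ENNReal.tsum_le_tsum hΦvol
        _ = (Fintype.card (↥T → Bool) : ℝ≥0∞) * 2⁻¹ ^ (3 * n) := by
            rw [tsum_fintype, Finset.sum_const, nsmul_eq_mul, Finset.card_univ]
        _ ≤ 2 ^ (n - p) * 2⁻¹ ^ (3 * n) := by
            refine mul_le_mul_left ?_ _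
            have hcard : Fintype.card (↥T → Bool) = 2 ^ T.ncard := by
              rw [Fintype.card_fun, Fintype.card_bool, ← Nat.card_coe_set_eq,
                Nat.card_eq_fintype_card]
            rw [hcard]
            have hNat : (2 : ℕ) ^ T.ncard ≤ 2 ^ (n - p) := Nat.pow_le_pow_right (by norm_num) hTcard
            calc ((2 ^ T.ncard : ℕ) : ℝ≥0∞) ≤ ((2 ^ (n - p) : ℕ) : ℝ≥0∞) := by
                  exact_mod_cast hNat
              _ = 2 ^ (n - p) := by push_cast; ring
    -- coverage of the union
    have hcover : ⋃₀ A ⊆ ⋃ (m : ℕ), ⋃ (t : ℕ), ⋃ x ∈ Y m, decodeSet G x (m + p + t) := by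
      intro x hx
      obtain ⟨s, hsA, hxs⟩ := hx
      set α : A := ⟨s, hsA⟩ with hαdef
      have hmem : xc α ∈ ⋃ k, Y k := hXY ⟨α, rfl⟩
      obtain ⟨m, hm⟩ := Set.mem_iUnion.mp hmem
      obtain ⟨n, hn1, hn2⟩ := hcov α x hxs (m + p)
      have hdec : decodeSet G (xc α) n = ⋃ i ∈ Finset.range (G n), dyo (σ α n i) :=
        decode_code G hG (σ α) n (fun i _ => hσc α n i) (hσvol α n)
      refine Set.mem_iUnion.mpr ⟨m, Set.mem_iUnion.mpr ⟨n - (m + p), ?_⟩⟩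
      refine Set.mem_biUnion hm ?_
      rw [show m + p + (n - (m + p)) = n from by omega, hdec]
      exact hn2
    -- sum up
    calc volume (⋃₀ A)
        ≤ volume (⋃ (m : ℕ), ⋃ (t : ℕ), ⋃ x ∈ Y m, decodeSet G x (m + p + t)) :=
          measure_mono hcover
      _ ≤ ∑' m, volume (⋃ (t : ℕ), ⋃ x ∈ Y m, decodeSet G x (m + p + t)) := measure_iUnion_le _
      _ ≤ ∑' m, ∑' t, volume (⋃ x ∈ Y m, decodeSet G x (m + p + t)) :=
          ENNReal.tsum_le_tsum fun m => measure_iUnion_le _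
      _ ≤ ∑' (m : ℕ), ∑' (t : ℕ), (2:ℝ≥0∞) ^ (m + p + t - p) * 2⁻¹ ^ (3 * (m + p + t)) :=
          ENNReal.tsum_le_tsum fun m => ENNReal.tsum_le_tsum fun t => hcount m (m + p + t)
      _ ≤ ∑' (m : ℕ), ∑' (t : ℕ), (2⁻¹:ℝ≥0∞) ^ m * (2⁻¹ ^ t * 2⁻¹ ^ p) := by
          refine ENNReal.tsum_le_tsum fun m => ENNReal.tsum_le_tsum fun t => ?_
          have e1 : m + p + t - p = m + t := by omega
          have e2 : 3 * (m + p + t) = (m + t) + (2 * m + 3 * p + 2 * t) := by ring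
          rw [e1, e2, two_pow_mul_inv_pow]
          have e3 : (2⁻¹:ℝ≥0∞) ^ m * (2⁻¹ ^ t * 2⁻¹ ^ p) = 2⁻¹ ^ (m + t + p) := by
            rw [pow_add, pow_add]; ring
          rw [e3]
          exact pow_le_pow_right_of_le_one' (by exact ENNReal.inv_le_one.mpr one_le_two) (by omega)
      _ = ∑' (m : ℕ), (2⁻¹:ℝ≥0∞) ^ m * ((∑' (t : ℕ), (2⁻¹:ℝ≥0∞) ^ t) * 2⁻¹ ^ p) := by
          refine tsum_congr fun m => ?_
          rw [ENNReal.tsum_mul_left, ENNReal.tsum_mul_right]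
      _ = (∑' (m : ℕ), (2⁻¹:ℝ≥0∞) ^ m) * ((∑' (t : ℕ), (2⁻¹:ℝ≥0∞) ^ t) * 2⁻¹ ^ p) :=
          ENNReal.tsum_mul_right
      _ = 2 * (2 * 2⁻¹ ^ p) := by
          rw [ENNReal.tsum_geometric, ENNReal.one_sub_inv_two, inv_inv]
  -- conclude
  by_contra hvol0
  have h4 : ((4:ℝ≥0∞))⁻¹ * volume (⋃₀ A) ≠ 0 := by
    rw [Ne, mul_eq_zero]
    push_neg
    exact ⟨by norm_num, hvol0⟩
  obtain ⟨p, hp⟩ := ENNReal.exists_inv_two_pow_lt h4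
  have hlt : 2 * (2 * (2⁻¹:ℝ≥0∞) ^ p) < volume (⋃₀ A) := by
    have e : 2 * (2 * (2⁻¹:ℝ≥0∞) ^ p) = 4 * 2⁻¹ ^ p := by ring
    rw [e]
    calc (4:ℝ≥0∞) * 2⁻¹ ^ p < 4 * (4⁻¹ * volume (⋃₀ A)) := by
          rw [ENNReal.mul_lt_mul_iff_right (by norm_num) (by norm_num)]
          exact hp
      _ = volume (⋃₀ A) := by
          rw [← mul_assoc, ENNReal.mul_inv_cancel (by norm_num) (by norm_num), one_mul]
  exact absurd (hfinal p) (not_le.mpr hlt)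


end R16

theorem stmt16 : min nonR boundingNum ≤ addNull := by
  classical
  by_contra h
  push_neg at h
  rw [lt_min_iff] at h
  obtain ⟨h1, h2⟩ := h
  have hne : {c : Cardinal | ∃ A : Set (Set ℝ), Cardinal.mk A = c ∧
      (∀ s ∈ A, MeasureTheory.volume s = 0) ∧ MeasureTheory.volume (⋃₀ A) ≠ 0}.Nonempty := by
    refine ⟨_, Set.range fun x : ℝ => ({x} : Set ℝ), rfl, ?_, ?_⟩
    · rintro s ⟨x, rfl⟩
      exact Real.volume_singleton
    · rw [Set.sUnion_range, Set.iUnion_of_singleton, Real.volume_univ]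
      simp
  obtain ⟨A, hAcard, hAnull, hAvol⟩ := csInf_mem hne
  exact hAvol (R16.main_null A hAnull (hAcard ▸ h2) (hAcard ▸ h1))
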